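/- At an optimal solution (q̃, Ũ, ν̃) of Problem P3, the auxiliary variable is tight: Σ_k q̃_k = ν̃ · Σ_k p_max^(k). -/

import Mathlib

open Finset

/-- Tightness of the auxiliary variable in Problem P3: at an optimal solution
`(q̃, ũ, ν̃)` of P3, the total-power constraint is tight,
`Σ_k q̃_k = ν̃ · Σ_k p_max^(k)`. -/
theorem stmt_16 {U : Type*} {K : ℕ}
    (S : (Fin K → ℝ) → U → ℝ) (Feas : (Fin K → ℝ) → U → Prop)
    (pmax : Fin K → ℝ) (C₀ C₁ νstar : ℝ)
    (hC₀ : 0 < C₀) (hC₁ : 0 < C₁) (hpmax : 0 < ∑ k, pmax k)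
    (hS : ∀ q u, Feas q u → 0 < S q u)
    (hνstar : ∀ q u, Feas q u → (∀ k, 0 ≤ q k ∧ q k ≤ pmax k) →
      νstar * ∑ k, pmax k ≤ ∑ k, q k)
    (qt : Fin K → ℝ) (ut : U) (νt : ℝ)
    (hfeas3 : Feas qt ut ∧ (∀ k, 0 ≤ qt k ∧ qt k ≤ pmax k) ∧
      (∑ k, qt k) ≤ νt * ∑ k, pmax k ∧ νstar ≤ νt ∧ νt ≤ 1)
    (hopt3 : ∀ q u (ν : ℝ), Feas q u → (∀ k, 0 ≤ q k ∧ q k ≤ pmax k) →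
      (∑ k, q k) ≤ ν * ∑ k, pmax k → νstar ≤ ν → ν ≤ 1 →
      S q u / (C₀ + C₁ * ν * ∑ k, pmax k)
        ≤ S qt ut / (C₀ + C₁ * νt * ∑ k, pmax k)) :
    (∑ k, qt k) = νt * ∑ k, pmax k := by
  obtain ⟨hfeas, hbox, hle, hνs, hν1⟩ := hfeas3
  set P := ∑ k, pmax k with hP
  set ν' := (∑ k, qt k) / P with hν'
  have hq0 : 0 ≤ ∑ k, qt k := Finset.sum_nonneg fun k _ => (hbox k).1
  have hν'eq : (∑ k, qt k) = ν' * P := by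
    rw [hν', div_mul_cancel₀ _ hpmax.ne']
  have hν'νt : ν' ≤ νt := by
    rw [hν', div_le_iff₀ hpmax]; exact hle
  have hν'star : νstar ≤ ν' := by
    have := hνstar qt ut hfeas hbox
    rw [hν', le_div_iff₀ hpmax]; linarith
  have key := hopt3 qt ut ν' hfeas hbox (le_of_eq hν'eq) hν'star (hν'νt.trans hν1)
  have hSpos := hS qt ut hfeas
  have hν'0 : 0 ≤ ν' := div_nonneg hq0 hpmax.le
  have hd1 : 0 < C₀ + C₁ * ν' * P := by positivity
  have hd2 : 0 < C₀ + C₁ * νt * P := by nlinarith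
  have hden : C₀ + C₁ * νt * P ≤ C₀ + C₁ * ν' * P := by
    by_contra h
    push_neg at h
    have := div_lt_div_of_pos_left hSpos hd1 h
    linarith
  have : νt ≤ ν' := by nlinarith [mul_pos hC₁ hpmax]
  have : νt * P ≤ ν' * P := by nlinarith
  linarith [hν'eq]
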